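/- Let q ∈ ℕ, α, β, L > 0, and let λ, x, y, u, x⁺ ∈ ℝ^q. Let g, ĝ : ℝ^q → ℝ^q be two maps (gradients of the local loss over two neighbouring datasets) satisfying ‖g(y)‖ ≤ L and ‖ĝ(y)‖ ≤ L. Define λ' = λ + β(x − y); y⁺ = y − α(g(y) − λ'); ŷ⁺ = y − α(ĝ(y) − λ'); λ⁺ = λ' + β[(x⁺ − x) − (y⁺ − y)]; λ̂⁺ = λ' + β[(x⁺ − x) − (ŷ⁺ − y)]; u⁺ = u + λ⁺ − λ; û⁺ = u + λ̂⁺ − λ. Then u⁺ − û⁺ = αβ(g(y) − ĝ(y)), and hence ‖u⁺ − û⁺‖ ≤ 2αβL ≤ 4αβL. -/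
import Mathlib

/-- Lemma 5 of the paper: the sensitivity of the transmitted variable `u` of
DP-RECAL with respect to changing one record of the active agent's local
dataset is bounded by `4αβL`. -/
theorem dp_recal_sensitivity
    (q : ℕ) (α β L : ℝ) (hα : 0 < α) (hβ : 0 < β) (hL : 0 < L)
    (lam x y u xplus : EuclideanSpace ℝ (Fin q))
    (g ghat : EuclideanSpace ℝ (Fin q) → EuclideanSpace ℝ (Fin q))
    (hg : ‖g y‖ ≤ L) (hghat : ‖ghat y‖ ≤ L)
    (lam' yplus yhatplus lamplus lamhatplus uplus uhatplus :
      EuclideanSpace ℝ (Fin q))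
    (hlam' : lam' = lam + β • (x - y))
    (hyplus : yplus = y - α • (g y - lam'))
    (hyhatplus : yhatplus = y - α • (ghat y - lam'))
    (hlamplus : lamplus = lam' + β • ((xplus - x) - (yplus - y)))
    (hlamhatplus : lamhatplus = lam' + β • ((xplus - x) - (yhatplus - y)))
    (huplus : uplus = u + lamplus - lam)
    (huhatplus : uhatplus = u + lamhatplus - lam) :
    uplus - uhatplus = (α * β) • (g y - ghat y) ∧
    ‖uplus - uhatplus‖ ≤ 2 * α * β * L ∧
    ‖uplus - uhatplus‖ ≤ 4 * α * β * L := by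
  have key : uplus - uhatplus = (α * β) • (g y - ghat y) := by
    subst huplus huhatplus hlamplus hlamhatplus hyplus hyhatplus
    simp only [smul_sub, smul_smul, mul_comm α β]
    abel
  refine ⟨key, ?_, ?_⟩
  · rw [key, norm_smul]
    have h1 : ‖g y - ghat y‖ ≤ 2 * L := by
      calc ‖g y - ghat y‖ ≤ ‖g y‖ + ‖ghat y‖ := norm_sub_le _ _
        _ ≤ 2 * L := by linarith
    have h2 : |α * β| = α * β := abs_of_pos (mul_pos hα hβ)
    rw [Real.norm_eq_abs, h2]
    calc α * β * ‖g y - ghat y‖ ≤ α * β * (2 * L) := by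
          exact mul_le_mul_of_nonneg_left h1 (le_of_lt (mul_pos hα hβ))
      _ = 2 * α * β * L := by ring
  · rw [key, norm_smul, Real.norm_eq_abs, abs_of_pos (mul_pos hα hβ)]
    have h1 : ‖g y - ghat y‖ ≤ 2 * L := by
      calc ‖g y - ghat y‖ ≤ ‖g y‖ + ‖ghat y‖ := norm_sub_le _ _
        _ ≤ 2 * L := by linarith
    nlinarith [mul_pos hα hβ, norm_nonneg (g y - ghat y)]
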